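/- arXiv:2604.01451 — 5 statements merged into one kernel-verified Lean document; each statement's English description precedes it below -/
import Mathlib

section
/- Let a, b be positive integers with a prime and a > b, and let V ∈ ℤ^{(a-1)×b} be the reduced Vandermonde matrix V_{i,j} = i^{j-1} mod a. Then for every nonzero integer vector x ∈ ℤ^{a-1} with fewer than b nonzero entries, the vector x·V is nonzero. -/
open Matrix Finset

/-- For the reduced Vandermonde matrix `V i j = (i+1)^j mod a` with `a` prime,
`a > b`, every nonzero integer vector `x` with fewer than `b` nonzero entries
satisfies `x ᵥ* V ≠ 0`. -/
theorem stmt1 (a b : ℕ) (ha : 0 < a) (hb : 0 < b) (hprime : Nat.Prime a) (hab : b < a)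
    (V : Matrix (Fin (a - 1)) (Fin b) ℤ)
    (hV : ∀ i j, V i j = ((i : ℤ) + 1) ^ (j : ℕ) % (a : ℤ))
    (x : Fin (a - 1) → ℤ) (hx : x ≠ 0)
    (hsupp : (Finset.univ.filter (fun i => x i ≠ 0)).card < b) :
    x ᵥ* V ≠ 0 := by
  haveI : Fact (Nat.Prime a) := ⟨hprime⟩
  intro h
  set s : Finset (Fin (a - 1)) := Finset.univ.filter (fun i => x i ≠ 0) with hs
  set k := s.card with hk
  have hkb : k ≤ b := le_of_lt hsupp
  -- order iso enumerating s
  let eI := s.orderIsoOfFin rfl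
  let e : Fin k → Fin (a - 1) := fun p => (eI p : Fin (a - 1))
  have he_mem : ∀ p, e p ∈ s := fun p => (eI p).2
  have he_inj : Function.Injective e := fun p q hpq => by
    have := eI.injective (Subtype.ext hpq); exact this
  -- the square submatrix
  let M : Matrix (Fin k) (Fin k) ℤ := fun p q => V (e p) (Fin.castLE hkb q)
  let y : Fin k → ℤ := fun p => x (e p)
  have hy : ∀ p, y p ≠ 0 := fun p => (Finset.mem_filter.mp (he_mem p)).2
  -- y ᵥ* M = 0
  have hyM : y ᵥ* M = 0 := by
    funext q
    have h0 : (x ᵥ* V) (Fin.castLE hkb q) = 0 := by rw [h]; rfl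
    have hsum : ∑ i, x i * V i (Fin.castLE hkb q) = 0 := by
      simpa [Matrix.vecMul, dotProduct] using h0
    have hsub : ∑ i ∈ s, x i * V i (Fin.castLE hkb q)
        = ∑ i, x i * V i (Fin.castLE hkb q) := by
      apply Finset.sum_subset (Finset.subset_univ s)
      intro i _ hi
      have : x i = 0 := by
        by_contra hxi
        exact hi (Finset.mem_filter.mpr ⟨Finset.mem_univ i, hxi⟩)
      simp [this]
    have hre : ∑ i ∈ s, x i * V i (Fin.castLE hkb q)
        = ∑ p : Fin k, x (e p) * V (e p) (Fin.castLE hkb q) := by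
      rw [← Finset.sum_attach s (fun i => x i * V i (Fin.castLE hkb q))]
      exact (Equiv.sum_comp eI.toEquiv
        (fun i => x (i : Fin (a-1)) * V (i : Fin (a-1)) (Fin.castLE hkb q))).symm
    have : ∑ p : Fin k, x (e p) * V (e p) (Fin.castLE hkb q) = 0 := by
      rw [← hre, hsub, hsum]
    simpa [Matrix.vecMul, dotProduct, M, y] using this
  -- determinant of M is nonzero mod a
  let v : Fin k → ZMod a := fun p => ((e p : ℕ) : ZMod a) + 1
  have hv_inj : Function.Injective v := by
    intro p q hpq
    apply he_inj
    have : ((e p : ℕ) : ZMod a) = ((e q : ℕ) : ZMod a) := by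
      simpa [v] using hpq
    have hp : (e p : ℕ) < a := lt_of_lt_of_le (e p).2 (Nat.sub_le a 1)
    have hq : (e q : ℕ) < a := lt_of_lt_of_le (e q).2 (Nat.sub_le a 1)
    have := (ZMod.natCast_eq_natCast_iff' _ _ _).mp this
    rw [Nat.mod_eq_of_lt hp, Nat.mod_eq_of_lt hq] at this
    exact Fin.ext this
  have hmap : M.map (Int.cast : ℤ → ZMod a) = Matrix.vandermonde v := by
    funext p q
    simp only [Matrix.map_apply, Matrix.vandermonde, M]
    show ((V (e p) (Fin.castLE hkb q) : ℤ) : ZMod a) = v p ^ (q : ℕ)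
    rw [hV]
    push_cast [ZMod.intCast_mod]
    simp [v, Matrix.of_apply]
  have hdet0 : ((M.det : ℤ) : ZMod a) ≠ 0 := by
    rw [show ((M.det : ZMod a)) = (M.map (Int.cast : ℤ → ZMod a)).det from
        RingHom.map_det (Int.castRingHom (ZMod a)) M, hmap, Matrix.det_vandermonde]
    apply Finset.prod_ne_zero_iff.mpr
    intro i _
    apply Finset.prod_ne_zero_iff.mpr
    intro j hj
    have hij : i ≠ j := by
      intro hij; subst hij; simp at hj
    exact sub_ne_zero_of_ne fun hvij => hij (hv_inj hvij.symm)
  have hdet : M.det ≠ 0 := fun h0 => hdet0 (by rw [h0]; simp)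
  -- conclude y = 0
  have hy0 : M.det • y = 0 := by
    have := congrArg (fun z => z ᵥ* M.adjugate) hyM
    simpa [Matrix.vecMul_vecMul, Matrix.mul_adjugate, Matrix.smul_vecMul] using this
  -- contradiction: s is nonempty since x ≠ 0
  have hne : s.Nonempty := by
    rcases Function.ne_iff.mp hx with ⟨i, hi⟩
    exact ⟨i, Finset.mem_filter.mpr ⟨Finset.mem_univ i, hi⟩⟩
  have hkpos : 0 < k := Finset.card_pos.mpr hne
  have := congrFun hy0 ⟨0, hkpos⟩
  simp only [Pi.smul_apply, smul_eq_mul, Pi.zero_apply, mul_eq_zero] at this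
  rcases this with h1 | h1
  · exact hdet h1
  · exact hy _ h1
end

section
/- Let G = (V, E) be a d-regular undirected multigraph on n vertices whose adjacency matrix has second largest eigenvalue magnitude at most ρ. Then for every positive integer r and every subset S ⊆ V, the probability that a uniformly random walk of length r (a uniform starting vertex followed by r−1 uniform random steps) has all r visited vertices contained in S is at most (|S|/n + ρ/d)^r. -/
open Matrix Finset

noncomputable section ExpanderWalkAux

variable {n : ℕ}

/-- Euclidean norm of a vector, as a square root of a sum of squares. -/
def ewN (x : Fin n → ℝ) : ℝ := Real.sqrt (∑ i, x i ^ 2)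

lemma ewN_nonneg (x : Fin n → ℝ) : 0 ≤ ewN x := Real.sqrt_nonneg _

lemma ewN_sq (x : Fin n → ℝ) : ewN x ^ 2 = ∑ i, x i ^ 2 :=
  Real.sq_sqrt (Finset.sum_nonneg fun _ _ => sq_nonneg _)

lemma ewN_le_ewN {x y : Fin n → ℝ} (h : ∑ i, x i ^ 2 ≤ ∑ i, y i ^ 2) :
    ewN x ≤ ewN y := Real.sqrt_le_sqrt h

lemma ewN_le_of_sq_le {x : Fin n → ℝ} {c : ℝ} (hc : 0 ≤ c)
    (h : ∑ i, x i ^ 2 ≤ c ^ 2) : ewN x ≤ c := by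
  have := Real.sqrt_le_sqrt h
  rwa [Real.sqrt_sq hc] at this

lemma ewCS (x y : Fin n → ℝ) : ∑ i, x i * y i ≤ ewN x * ewN y :=
  Real.sum_mul_le_sqrt_mul_sqrt _ _ _

lemma ewCS_abs (x y : Fin n → ℝ) : |∑ i, x i * y i| ≤ ewN x * ewN y := by
  rw [abs_le]
  constructor
  · have h := ewCS (fun i => -x i) y
    have : ewN (fun i => -x i) = ewN x := by
      unfold ewN; congr 1; apply Finset.sum_congr rfl; intro i _; ring
    rw [this] at h
    simp only [neg_mul] at h
    rw [Finset.sum_neg_distrib] at h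
    linarith
  · exact ewCS x y

lemma ewN_add_le (x y : Fin n → ℝ) :
    ewN (fun i => x i + y i) ≤ ewN x + ewN y := by
  apply ewN_le_of_sq_le (add_nonneg (ewN_nonneg x) (ewN_nonneg y))
  have h1 : ∑ i, (x i + y i) ^ 2 = (∑ i, x i ^ 2) + 2 * (∑ i, x i * y i) + ∑ i, y i ^ 2 := by
    rw [Finset.mul_sum, ← Finset.sum_add_distrib, ← Finset.sum_add_distrib]
    apply Finset.sum_congr rfl; intro i _; ring
  have h2 := ewCS x y
  have h3 := ewN_sq x
  have h4 := ewN_sq y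
  nlinarith [ewN_nonneg x, ewN_nonneg y]


section Main

variable (A : Matrix (Fin n) (Fin n) ℝ) (S : Finset (Fin n))

/-- Indicator vector of `S`. -/
def ewChi (S : Finset (Fin n)) : Fin n → ℝ := fun i => if i ∈ S then 1 else 0

/-- Restriction of a vector to `S`. -/
def ewProj (S : Finset (Fin n)) (x : Fin n → ℝ) : Fin n → ℝ :=
  fun i => if i ∈ S then x i else 0

/-- Walk-counting vectors. -/
def ewW (A : Matrix (Fin n) (Fin n) ℝ) (S : Finset (Fin n)) : ℕ → Fin n → ℝ
  | 0 => ewChi S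
  | (k+1) => ewProj S (A.mulVec (ewW A S k))

lemma ewChi_sq_sum : ∑ i, (ewChi S i) ^ 2 = (S.card : ℝ) := by
  simp [ewChi, apply_ite (· ^ (2:ℕ))]

lemma ewN_chi : ewN (ewChi S) = Real.sqrt S.card := by
  rw [ewN, ewChi_sq_sum]

lemma ewKey (hn : 0 < n) (d : ℕ) (ρ : ℝ) (hρ : 0 ≤ ρ)
    (hreg : ∀ i, ∑ j, A i j = (d : ℝ))
    (hspec : ∀ v : Fin n → ℝ, (∑ i, v i) = 0 →
      ∑ i, (A.mulVec v i) ^ 2 ≤ ρ ^ 2 * ∑ i, (v i) ^ 2)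
    (x : Fin n → ℝ) (hx : ∀ i, i ∉ S → x i = 0) :
    ewN (ewProj S (A.mulVec x)) ≤ ((d : ℝ) * S.card / n + ρ) * ewN x := by
  have hn' : (0:ℝ) < n := by exact_mod_cast hn
  set c : ℝ := (∑ i, x i) / n with hc
  set y : Fin n → ℝ := fun i => x i - c with hy
  have hsum : ∑ i, x i = n * c := by rw [hc]; field_simp
  have hysum : ∑ i, y i = 0 := by
    simp only [hy, Finset.sum_sub_distrib, Finset.sum_const, Finset.card_univ,
      Fintype.card_fin, nsmul_eq_mul, hsum]
    ring
  have hAx : ∀ i, A.mulVec x i = (d : ℝ) * c + A.mulVec y i := by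
    intro i
    have h1 : A.mulVec x i - A.mulVec y i = (d:ℝ) * c := by
      simp only [Matrix.mulVec, dotProduct]
      rw [← Finset.sum_sub_distrib]
      have h2 : ∀ j ∈ Finset.univ, A i j * x j - A i j * y j = A i j * c := by
        intro j _; simp only [hy]; ring
      rw [Finset.sum_congr rfl h2, ← Finset.sum_mul, hreg i]
    linarith
  have hproj : ewProj S (A.mulVec x)
      = fun i => (if i ∈ S then (d:ℝ) * c else 0) + ewProj S (A.mulVec y) i := by
    funext i
    simp only [ewProj, hAx i]
    by_cases h : i ∈ S <;> simp [h]
  have hstep1 : ewN (ewProj S (A.mulVec x))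
      ≤ ewN (fun i => if i ∈ S then (d:ℝ)*c else 0) + ewN (ewProj S (A.mulVec y)) := by
    rw [hproj]; exact ewN_add_le _ _
  have ht1 : ewN (fun i : Fin n => if i ∈ S then (d:ℝ)*c else 0)
      = Real.sqrt S.card * |(d:ℝ)*c| := by
    unfold ewN
    have h3 : ∑ i : Fin n, (if i ∈ S then (d:ℝ)*c else 0)^2 = (S.card : ℝ) * ((d:ℝ)*c)^2 := by
      simp [apply_ite (· ^ (2:ℕ))]
    rw [h3, Real.sqrt_mul (Nat.cast_nonneg _), Real.sqrt_sq_eq_abs]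
  have ht2 : ewN (ewProj S (A.mulVec y)) ≤ ρ * ewN y := by
    apply ewN_le_of_sq_le (mul_nonneg hρ (ewN_nonneg y))
    have h1 : ∑ i, (ewProj S (A.mulVec y) i)^2 ≤ ∑ i, (A.mulVec y i)^2 := by
      apply Finset.sum_le_sum; intro i _
      by_cases h : i ∈ S <;> simp [ewProj, h, sq_nonneg]
    have h2 := hspec y hysum
    have h4 := ewN_sq y
    calc ∑ i, (ewProj S (A.mulVec y) i)^2 ≤ ρ ^ 2 * ∑ i, (y i)^2 := le_trans h1 h2
      _ = (ρ * ewN y)^2 := by rw [← h4]; ring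
  have hNy : ewN y ≤ ewN x := by
    apply ewN_le_ewN
    have e : ∑ i, y i ^ 2 = (∑ i, (x i ^ 2 - 2*c*x i)) + ∑ _i : Fin n, c^2 := by
      rw [← Finset.sum_add_distrib]
      apply Finset.sum_congr rfl; intro i _; simp only [hy]; ring
    rw [Finset.sum_sub_distrib, ← Finset.mul_sum, hsum] at e
    simp only [Finset.sum_const, Finset.card_univ, Fintype.card_fin, nsmul_eq_mul] at e
    nlinarith [sq_nonneg c, hn']
  have hcabs : |c| ≤ ewN x * Real.sqrt S.card / n := by
    have hxc : ∑ i, x i = ∑ i, x i * ewChi S i := by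
      apply Finset.sum_congr rfl; intro i _
      by_cases h : i ∈ S <;> simp [ewChi, h]
      exact hx i h
    have hcs := ewCS_abs x (ewChi S)
    rw [ewN_chi] at hcs
    calc |c| = |∑ i, x i| / n := by rw [hc, abs_div, abs_of_pos hn']
      _ ≤ (ewN x * Real.sqrt S.card) / n := by
          rw [hxc]
          gcongr
  have hss : Real.sqrt S.card * Real.sqrt S.card = (S.card : ℝ) :=
    Real.mul_self_sqrt (Nat.cast_nonneg _)
  have habs : |(d:ℝ)*c| = (d:ℝ) * |c| := by rw [abs_mul, Nat.abs_cast]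
  have hsqrtnn : (0:ℝ) ≤ Real.sqrt S.card := Real.sqrt_nonneg _
  calc ewN (ewProj S (A.mulVec x))
      ≤ Real.sqrt S.card * |(d:ℝ)*c| + ρ * ewN x := by
        have h5 : ρ * ewN y ≤ ρ * ewN x := mul_le_mul_of_nonneg_left hNy hρ
        rw [ht1] at hstep1; linarith
    _ ≤ Real.sqrt S.card * ((d:ℝ) * (ewN x * Real.sqrt S.card / n)) + ρ * ewN x := by
        have h6 : |(d:ℝ)*c| ≤ (d:ℝ) * (ewN x * Real.sqrt S.card / n) := by
          rw [habs]
          exact mul_le_mul_of_nonneg_left hcabs (Nat.cast_nonneg _)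
        have := mul_le_mul_of_nonneg_left h6 hsqrtnn
        linarith
    _ = ((d:ℝ) * (ewN x / n)) * (Real.sqrt S.card * Real.sqrt S.card) + ρ * ewN x := by ring
    _ = ((d : ℝ) * S.card / n + ρ) * ewN x := by rw [hss]; ring


lemma ewW_supported (k : ℕ) : ∀ i, i ∉ S → ewW A S k i = 0 := by
  cases k <;> intro i h <;> simp [ewW, ewChi, ewProj, h]

lemma ewW_norm (hn : 0 < n) (d : ℕ) (ρ : ℝ) (hρ : 0 ≤ ρ)
    (hreg : ∀ i, ∑ j, A i j = (d : ℝ))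
    (hspec : ∀ v : Fin n → ℝ, (∑ i, v i) = 0 →
      ∑ i, (A.mulVec v i) ^ 2 ≤ ρ ^ 2 * ∑ i, (v i) ^ 2) (m : ℕ) :
    ewN (ewW A S m) ≤ ((d:ℝ) * S.card / n + ρ) ^ m * Real.sqrt S.card := by
  induction m with
  | zero => simp [ewW, ewN_chi]
  | succ k ih =>
    have hK : 0 ≤ (d:ℝ) * S.card / n + ρ := by positivity
    calc ewN (ewW A S (k+1)) = ewN (ewProj S (A.mulVec (ewW A S k))) := rfl
      _ ≤ ((d:ℝ) * S.card / n + ρ) * ewN (ewW A S k) :=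
          ewKey A S hn d ρ hρ hreg hspec _ (ewW_supported A S k)
      _ ≤ ((d:ℝ) * S.card / n + ρ) * (((d:ℝ) * S.card / n + ρ) ^ k * Real.sqrt S.card) :=
          mul_le_mul_of_nonneg_left ih hK
      _ = ((d:ℝ) * S.card / n + ρ) ^ (k+1) * Real.sqrt S.card := by ring

lemma ewComb (m : ℕ) : ∀ j : Fin n,
    (∑ v : Fin (m + 1) → Fin n,
      if (∀ i, v i ∈ S) ∧ v 0 = j then ∏ i : Fin m, A (v i.castSucc) (v i.succ) else 0)
    = ewW A S m j := by
  induction m with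
  | zero =>
    intro j
    have h0 : (∑ v : Fin 1 → Fin n,
        if (∀ i, v i ∈ S) ∧ v 0 = j then ∏ i : Fin 0, A (v i.castSucc) (v i.succ) else 0)
        = ∑ a : Fin n, if a = j then (if j ∈ S then (1:ℝ) else 0) else 0 := by
      rw [← Fintype.sum_equiv ((Equiv.funUnique (Fin 1) (Fin n)).symm)
        (fun a => if a = j then (if j ∈ S then (1:ℝ) else 0) else 0) _ ?_]
      intro a
      by_cases h1 : a = j
      · subst h1
        by_cases h2 : a ∈ S <;> simp [h2, Equiv.funUnique]
      · simp [h1, Equiv.funUnique]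
    rw [h0, Finset.sum_ite_eq' Finset.univ j]
    simp [ewW, ewChi]
  | succ k ih =>
    intro j
    have hsum : (∑ v : Fin (k + 2) → Fin n,
        if (∀ i, v i ∈ S) ∧ v 0 = j then ∏ i : Fin (k+1), A (v i.castSucc) (v i.succ) else 0)
        = ∑ p : Fin n × (Fin (k+1) → Fin n),
            (if (∀ i, Fin.cons (α := fun _ => Fin n) p.1 p.2 i ∈ S) ∧ p.1 = j then
              ∏ i : Fin (k+1), A (Fin.cons (α := fun _ => Fin n) p.1 p.2 i.castSucc) (Fin.cons (α := fun _ => Fin n) p.1 p.2 i.succ)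
            else 0) := by
      refine (Fintype.sum_equiv (Fin.consEquiv fun _ => Fin n) _ _ ?_).symm
      intro p
      rfl
    have hG : ∀ (a : Fin n) (v' : Fin (k+1) → Fin n),
        (if (∀ i, Fin.cons (α := fun _ => Fin n) a v' i ∈ S) ∧ a = j then
            ∏ i : Fin (k+1), A (Fin.cons (α := fun _ => Fin n) a v' i.castSucc) (Fin.cons (α := fun _ => Fin n) a v' i.succ)
          else 0)
        = if a = j then (if a ∈ S ∧ (∀ i, v' i ∈ S) then
            A a (v' 0) * ∏ i : Fin k, A (v' i.castSucc) (v' i.succ) else 0) else 0 := by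
      intro a v'
      have hcond : (∀ i, Fin.cons (α := fun _ => Fin n) a v' i ∈ S) ↔ a ∈ S ∧ ∀ i, v' i ∈ S := by
        constructor
        · intro h; exact ⟨by simpa using h 0, fun i => by simpa using h i.succ⟩
        · rintro ⟨h0, h1⟩ i
          refine Fin.cases ?_ ?_ i <;> simp [h0, h1]
      have hprod : (∏ i : Fin (k+1), A (Fin.cons (α := fun _ => Fin n) a v' i.castSucc) (Fin.cons (α := fun _ => Fin n) a v' i.succ))
          = A a (v' 0) * ∏ i : Fin k, A (v' i.castSucc) (v' i.succ) := by
        rw [Fin.prod_univ_succ]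
        refine congrArg₂ (· * ·) ?_ ?_
        · simp
        · apply Finset.prod_congr rfl; intro i _
          refine congrArg₂ A ?_ ?_
          · rw [← Fin.succ_castSucc]; simp [Fin.cons_succ]
          · simp [Fin.cons_succ]
      by_cases h1 : a = j
      · subst h1
        by_cases h2 : a ∈ S ∧ ∀ i, v' i ∈ S
        · rw [if_pos ⟨hcond.mpr h2, rfl⟩, if_pos rfl, if_pos h2, hprod]
        · simp [hcond, h2]
      · simp [h1]
    rw [hsum]
    rw [Fintype.sum_prod_type]
    simp only [hG]
    simp only [Finset.sum_ite_irrel, Finset.sum_const_zero]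
    rw [Finset.sum_ite_eq' Finset.univ j]
    simp only [Finset.mem_univ, if_true]
    by_cases hj : j ∈ S
    · simp only [hj, true_and]
      have hRHS : ewW A S (k+1) j = ∑ j', A j j' * ewW A S k j' := by
        simp [ewW, ewProj, hj, Matrix.mulVec, dotProduct]
      rw [hRHS]
      have hswap : ∑ j', A j j' * ewW A S k j'
          = ∑ j', ∑ v' : Fin (k+1) → Fin n,
              (if ((∀ i, v' i ∈ S) ∧ v' 0 = j') then
                A j j' * ∏ i : Fin k, A (v' i.castSucc) (v' i.succ) else 0) := by
        apply Finset.sum_congr rfl; intro j' _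
        rw [← ih j', Finset.mul_sum]
        apply Finset.sum_congr rfl; intro v' _
        rw [mul_ite, mul_zero]
      rw [hswap, Finset.sum_comm]
      apply Finset.sum_congr rfl; intro v' _
      by_cases hall : ∀ i, v' i ∈ S
      · simp only [hall, implies_true, true_and, if_true]
        rw [Finset.sum_ite_eq Finset.univ (v' 0)]
        simp
      · simp [hall]
    · simp only [hj, false_and, if_false, Finset.sum_const_zero]
      simp [ewW, ewProj, hj]

end Main

end ExpanderWalkAux


/-- Expander-walk hitting bound. `A` is the adjacency matrix of a `d`-regular
undirected multigraph on `n` vertices (symmetric, natural-number entries, row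
sums `d`) whose second largest eigenvalue has magnitude at most `ρ`
(expressed spectrally: `‖A v‖ ≤ ρ ‖v‖` for vectors `v` orthogonal to the
all-ones vector). A uniformly random walk visiting `r = m + 1` vertices
(uniform start, uniform random steps; such a walk `v` has probability
proportional to `∏ A (v i) (v (i+1))`) stays inside a set `S` with
probability at most `(|S|/n + ρ/d)^r`. -/
theorem stmt4 (n d : ℕ) (hn : 0 < n) (hd : 0 < d) (ρ : ℝ) (hρ : 0 ≤ ρ)
    (A : Matrix (Fin n) (Fin n) ℝ)
    (hsym : A.IsSymm)
    (hnat : ∀ i j, ∃ k : ℕ, A i j = (k : ℝ))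
    (hreg : ∀ i, ∑ j, A i j = (d : ℝ))
    (hspec : ∀ v : Fin n → ℝ, (∑ i, v i) = 0 →
      ∑ i, (A.mulVec v i) ^ 2 ≤ ρ ^ 2 * ∑ i, (v i) ^ 2)
    (m : ℕ) (S : Finset (Fin n)) :
    (∑ v : Fin (m + 1) → Fin n,
        if ∀ i, v i ∈ S then ∏ i : Fin m, A (v i.castSucc) (v i.succ) else 0)
      / ((n : ℝ) * (d : ℝ) ^ m)
    ≤ ((S.card : ℝ) / n + ρ / d) ^ (m + 1) := by
  have hn' : (0:ℝ) < n := by exact_mod_cast hn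
  have hd' : (0:ℝ) < d := by exact_mod_cast hd
  set K : ℝ := (d:ℝ) * S.card / n + ρ with hKdef
  have hβ : (0:ℝ) ≤ (S.card : ℝ) / n + ρ / d := by positivity
  -- step 1 : walk sum equals the sum of the walk-counting vector
  have h1 : (∑ v : Fin (m + 1) → Fin n,
        if ∀ i, v i ∈ S then ∏ i : Fin m, A (v i.castSucc) (v i.succ) else 0)
      = ∑ j, ewW A S m j := by
    have hv : ∀ v : Fin (m+1) → Fin n,
        (if ∀ i, v i ∈ S then ∏ i : Fin m, A (v i.castSucc) (v i.succ) else 0)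
        = ∑ j, if (∀ i, v i ∈ S) ∧ v 0 = j
            then ∏ i : Fin m, A (v i.castSucc) (v i.succ) else 0 := by
      intro v
      by_cases h : ∀ i, v i ∈ S
      · rw [if_pos h]
        simp only [and_iff_right h]
        rw [Finset.sum_ite_eq Finset.univ (v 0)]
        simp
      · simp [h]
    rw [Finset.sum_congr rfl (fun v _ => hv v), Finset.sum_comm]
    exact Finset.sum_congr rfl fun j _ => ewComb A S m j
  -- step 2 : bound the sum by Cauchy-Schwarz and the norm decay
  have hws : (∑ j, ewW A S m j) ≤ (S.card : ℝ) * K ^ m := by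
    have ha : ∑ j, ewW A S m j = ∑ j, ewChi S j * ewW A S m j := by
      apply Finset.sum_congr rfl; intro j _
      by_cases h : j ∈ S
      · simp [ewChi, h]
      · simp [ewChi, h, ewW_supported A S m j h]
    rw [ha]
    calc ∑ j, ewChi S j * ewW A S m j ≤ ewN (ewChi S) * ewN (ewW A S m) := ewCS _ _
      _ ≤ Real.sqrt S.card * (K ^ m * Real.sqrt S.card) := by
          rw [ewN_chi]
          exact mul_le_mul_of_nonneg_left (ewW_norm A S hn d ρ hρ hreg hspec m)
            (Real.sqrt_nonneg _)
      _ = (Real.sqrt S.card * Real.sqrt S.card) * K ^ m := by ring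
      _ = (S.card : ℝ) * K ^ m := by rw [Real.mul_self_sqrt (Nat.cast_nonneg _)]
  rw [h1]
  have hKd : K / d = (S.card : ℝ)/n + ρ/d := by
    rw [hKdef]; field_simp
  calc (∑ j, ewW A S m j) / ((n : ℝ) * (d:ℝ)^m)
      ≤ ((S.card : ℝ) * K ^ m) / ((n : ℝ) * (d:ℝ)^m) := by gcongr
    _ = ((S.card : ℝ)/n) * (K/d)^m := by
        rw [div_pow]
        field_simp
    _ = ((S.card : ℝ)/n) * (((S.card : ℝ)/n + ρ/d))^m := by rw [hKd]
    _ ≤ ((S.card : ℝ)/n + ρ/d) * (((S.card : ℝ)/n + ρ/d))^m := by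
        have h8 : (0:ℝ) ≤ ρ/d := by positivity
        have h9 : ((S.card : ℝ)/n) ≤ (S.card : ℝ)/n + ρ/d := by linarith
        exact mul_le_mul_of_nonneg_right h9 (pow_nonneg hβ m)
    _ = ((S.card : ℝ) / n + ρ / d) ^ (m + 1) := by rw [pow_succ]; ring
end

section
/- Let B ∈ ℤ^{M×N} and B' ∈ ℤ^{M'×N'} be integer matrices with linearly independent rows generating lattices L(B) and L(B'). Define λ_0(L) as the minimum of ‖v‖_0 (number of nonzero entries) over nonzero lattice vectors v. Then λ_0(L(B ⊗ B')) ≤ λ_0(L(B)) · λ_0(L(B')), where B ⊗ B' is the Kronecker (tensor) product. -/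
open Matrix Finset

/-- The set of `ℓ₀`-norms (numbers of nonzero entries) of nonzero vectors of
the lattice generated by the rows of `B`. -/
def lamZeroSet {ι κ : Type*} [Fintype ι] [Fintype κ] [DecidableEq κ]
    (B : Matrix ι κ ℤ) : Set ℕ :=
  {k : ℕ | ∃ x : ι → ℤ, x ᵥ* B ≠ 0 ∧
    k = (Finset.univ.filter (fun j => (x ᵥ* B) j ≠ 0)).card}

/-- The tensor of two lattice vectors is the corresponding tensor lattice vector. -/
lemma key {M N M' N' : ℕ} (B : Matrix (Fin M) (Fin N) ℤ) (B' : Matrix (Fin M') (Fin N') ℤ)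
    (x : Fin M → ℤ) (x' : Fin M' → ℤ) :
    (fun p : Fin M × Fin M' => x p.1 * x' p.2) ᵥ* Matrix.kroneckerMap (· * ·) B B'
      = fun p => (x ᵥ* B) p.1 * (x' ᵥ* B') p.2 := by
  ext ⟨j, j'⟩
  simp only [vecMul, dotProduct, kroneckerMap, Matrix.of_apply, Fintype.sum_prod_type]
  rw [Finset.sum_mul_sum]
  exact Finset.sum_congr rfl fun i _ => Finset.sum_congr rfl fun i' _ => by ring

/-- `λ₀` (minimum number of nonzero entries of a nonzero lattice vector) is
sub-multiplicative under the tensor (Kronecker) product of lattice bases with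
linearly independent rows. -/
theorem stmt7 (M N M' N' : ℕ)
    (B : Matrix (Fin M) (Fin N) ℤ) (B' : Matrix (Fin M') (Fin N') ℤ)
    (hB : LinearIndependent ℤ (fun i => B i))
    (hB' : LinearIndependent ℤ (fun i => B' i)) :
    sInf (lamZeroSet (Matrix.kroneckerMap (· * ·) B B')) ≤
      sInf (lamZeroSet B) * sInf (lamZeroSet B') := by
  by_cases h1 : (lamZeroSet B).Nonempty
  · by_cases h2 : (lamZeroSet B').Nonempty
    · obtain ⟨x, hx, hxc⟩ := Nat.sInf_mem h1
      obtain ⟨x', hx', hxc'⟩ := Nat.sInf_mem h2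
      have hne : (fun p : Fin M × Fin M' => x p.1 * x' p.2) ᵥ* Matrix.kroneckerMap (· * ·) B B' ≠ 0 := by
        rw [key]
        obtain ⟨j, hj⟩ := Function.ne_iff.1 hx
        obtain ⟨j', hj'⟩ := Function.ne_iff.1 hx'
        intro h
        have := congrFun h (j, j')
        simp only [Pi.zero_apply] at this hj hj'
        exact mul_ne_zero hj hj' this
      have hmem : ((Finset.univ.filter (fun q : Fin N × Fin N' =>
          ((fun p : Fin M × Fin M' => x p.1 * x' p.2) ᵥ* Matrix.kroneckerMap (· * ·) B B') q ≠ 0)).card)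
          ∈ lamZeroSet (Matrix.kroneckerMap (· * ·) B B') :=
        ⟨_, hne, rfl⟩
      refine le_trans (Nat.sInf_le hmem) ?_
      rw [hxc, hxc']
      have : (Finset.univ.filter (fun q : Fin N × Fin N' =>
          ((fun p : Fin M × Fin M' => x p.1 * x' p.2) ᵥ* Matrix.kroneckerMap (· * ·) B B') q ≠ 0))
          = (Finset.univ.filter (fun j => (x ᵥ* B) j ≠ 0)) ×ˢ
            (Finset.univ.filter (fun j => (x' ᵥ* B') j ≠ 0)) := by
        rw [key]
        ext ⟨j, j'⟩
        simp [mul_ne_zero_iff]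
      rw [this, Finset.card_product]
    · have hz : ∀ x' : Fin M' → ℤ, x' ᵥ* B' = 0 := by
        intro x'
        by_contra h
        exact h2 ⟨_, x', h, rfl⟩
      have : lamZeroSet (Matrix.kroneckerMap (· * ·) B B') = ∅ := by
        ext k
        simp only [lamZeroSet, Set.mem_setOf_eq, Set.mem_empty_iff_false, iff_false, not_exists]
        intro y ⟨hy, _⟩
        apply hy
        ext ⟨j, j'⟩
        simp only [vecMul, dotProduct, kroneckerMap, Matrix.of_apply, Fintype.sum_prod_type, Pi.zero_apply]
        have : ∀ i : Fin M, ∑ i' : Fin M', y (i, i') * (B i j * B' i' j')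
            = B i j * (((fun i' => y (i, i')) ᵥ* B') j') := by
          intro i
          simp only [vecMul, dotProduct, Finset.mul_sum]
          exact Finset.sum_congr rfl fun i' _ => by ring
        simp only [this, hz, Pi.zero_apply, mul_zero, Finset.sum_const_zero]
      rw [this]
      simp
  · have hz : ∀ x : Fin M → ℤ, x ᵥ* B = 0 := by
      intro x
      by_contra h
      exact h1 ⟨_, x, h, rfl⟩
    have : lamZeroSet (Matrix.kroneckerMap (· * ·) B B') = ∅ := by
      ext k
      simp only [lamZeroSet, Set.mem_setOf_eq, Set.mem_empty_iff_false, iff_false, not_exists]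
      intro y ⟨hy, _⟩
      apply hy
      ext ⟨j, j'⟩
      simp only [vecMul, dotProduct, kroneckerMap, Matrix.of_apply, Fintype.sum_prod_type_right, Pi.zero_apply]
      have : ∀ i' : Fin M', ∑ i : Fin M, y (i, i') * (B i j * B' i' j')
          = (((fun i => y (i, i')) ᵥ* B) j) * B' i' j' := by
        intro i'
        simp only [vecMul, dotProduct, Finset.sum_mul]
        exact Finset.sum_congr rfl fun i _ => by ring
      simp only [this, hz, Pi.zero_apply, zero_mul, Finset.sum_const_zero]
    rw [this]
    simp
end

section
/- Let H = (V, E) be a hypergraph of arity d with N vertices and M hyperedges, let β ∈ [0,1], and let t be a positive integer with 1/t > β. Suppose every vertex subset V' ⊆ V fully contains at most (|V'|/N)^d · M + β·M hyperedges. Then for every δ ∈ [0,1] and every subset E' ⊆ E that is either empty or of size at least M/t: if the vertices touched by E' number at most N·δ, then |E'| ≤ M·δ^d / (1 − βt). -/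
open Finset

/-- Base case (`q = 1`) of the legal-expansion theorem.  If every vertex
subset `V'` fully contains at most `(|V'|/N)^d·M + β·M` hyperedges, then for
every `δ ∈ [0,1]` and every hyperedge subset `E'` that is empty or of size at
least `M/t` (with `1/t > β`): if `E'` touches at most `N·δ` vertices, then
`|E'| ≤ M·δ^d/(1 − βt)`. -/
theorem stmt10 (N M d t : ℕ) (hN : 0 < N) (hM : 0 < M) (hd : 0 < d) (ht : 0 < t)
    (β : ℝ) (hβ0 : 0 ≤ β) (hβ1 : β ≤ 1) (htβ : β < 1 / t)
    (E : Fin M → Finset (Fin N)) (harity : ∀ e, (E e).card = d)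
    (hexp : ∀ V' : Finset (Fin N),
      ((Finset.univ.filter (fun e => E e ⊆ V')).card : ℝ) ≤
        ((V'.card : ℝ) / N) ^ d * M + β * M)
    (δ : ℝ) (hδ0 : 0 ≤ δ) (hδ1 : δ ≤ 1)
    (E' : Finset (Fin M)) (hlegal : E' = ∅ ∨ (M : ℝ) / t ≤ E'.card)
    (htouch : ((E'.biUnion E).card : ℝ) ≤ N * δ) :
    (E'.card : ℝ) ≤ M * δ ^ d / (1 - β * t) := by
  have htR : (0 : ℝ) < t := by exact_mod_cast ht
  have hNR : (0 : ℝ) < N := by exact_mod_cast hN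
  have h1βt : 0 < 1 - β * t := by
    have : β * t < (1 / t) * t := by
      apply mul_lt_mul_of_pos_right htβ htR
    rw [one_div, inv_mul_cancel₀ (ne_of_gt htR)] at this
    linarith
  rcases hlegal with h | h
  · subst h
    simp only [card_empty, Nat.cast_zero]
    apply div_nonneg _ h1βt.le
    positivity
  · have hcard : (E'.card : ℝ) ≤ ((Finset.univ.filter (fun e => E e ⊆ E'.biUnion E)).card : ℝ) := by
      exact_mod_cast card_le_card (fun e he => mem_filter.mpr
        ⟨mem_univ _, subset_biUnion_of_mem E he⟩)
    have hratio : ((E'.biUnion E).card : ℝ) / N ≤ δ := by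
      rw [div_le_iff₀ hNR]
      linarith [htouch]
    have hpow : (((E'.biUnion E).card : ℝ) / N) ^ d ≤ δ ^ d :=
      pow_le_pow_left₀ (by positivity) hratio d
    have hMR : (0 : ℝ) ≤ M := by positivity
    have key : (E'.card : ℝ) ≤ δ ^ d * M + β * M := by
      calc (E'.card : ℝ) ≤ _ := hcard
        _ ≤ (((E'.biUnion E).card : ℝ) / N) ^ d * M + β * M := hexp _
        _ ≤ δ ^ d * M + β * M := by nlinarith
    have hMt : (M : ℝ) ≤ t * E'.card := by
      rw [div_le_iff₀ htR] at h
      linarith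
    rw [le_div_iff₀ h1βt]
    nlinarith
end

section
/- Let F be a finite field of size more than w, let w ≥ r be positive integers, let δ ∈ (0,1), and let G be as in the expander-walk amplification construction on a d-regular expander where random length-r walks stay in any set S with probability at most (|S|/N + δ)^r. If the code generated by G has relative minimum distance at least D, then the code generated by the amplified matrix G' has relative minimum distance at least 1 − ((1 − D + δ)^r + r/w). -/
open Matrix Finset

/-- Lower bound of the expander-walk distance amplification.  `W` is the set
of length-`r` walks on an expander whose vertices are the `N` columns of `G`,
such that a uniformly random walk stays inside any set `S` with probability at
most `(|S|/N + δ)^r`.  The amplified matrix `G'` has, for each walk `ω`, the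
block `C·V` where `C` collects the walk's columns and `V` is an `r × w`
Vandermonde matrix over `F` (`|F| > w ≥ r`).  If the code generated by `G`
has relative minimum distance at least `D`, then the code generated by `G'`
has relative minimum distance at least `1 − ((1 − D + δ)^r + r/w)`. -/
theorem stmt13 (F : Type*) [Field F] [Fintype F] [DecidableEq F]
    (M N r w : ℕ) (hM : 0 < M) (hN : 0 < N) (hr : 0 < r) (hw : r ≤ w)
    (hwF : w < Fintype.card F)
    (δ : ℝ) (hδ0 : 0 < δ) (hδ1 : δ < 1)
    (D : ℝ) (hD0 : 0 ≤ D) (hD1 : D ≤ 1)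
    (G : Matrix (Fin M) (Fin N) F)
    (hdist : ∀ x : Fin M → F, x ᵥ* G ≠ 0 →
      D * N ≤ ((Finset.univ.filter (fun j => (x ᵥ* G) j ≠ 0)).card : ℝ))
    (W : Type*) [Fintype W] [DecidableEq W] [Nonempty W]
    (vert : W → Fin r → Fin N)
    (hmix : ∀ S : Finset (Fin N),
      ((Finset.univ.filter (fun ω : W => ∀ i, vert ω i ∈ S)).card : ℝ) ≤
        ((S.card : ℝ) / N + δ) ^ r * Fintype.card W)
    (cf : Fin w → F) (hcf_inj : Function.Injective cf) (hcf_ne : ∀ j, cf j ≠ 0)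
    (V : Matrix (Fin r) (Fin w) F) (hV : ∀ i j, V i j = cf j ^ ((i : ℕ) + 1))
    (G' : Matrix (Fin M) (W × Fin w) F)
    (hG' : ∀ x ωj, G' x ωj = ∑ i : Fin r, G x (vert ωj.1 i) * V i ωj.2) :
    ∀ x : Fin M → F, x ᵥ* G' ≠ 0 →
      (1 - ((1 - D + δ) ^ r + (r : ℝ) / w)) * ((Fintype.card W : ℝ) * w) ≤
        ((Finset.univ.filter (fun j => (x ᵥ* G') j ≠ 0)).card : ℝ) := by
  intro x hx
  set y := x ᵥ* G with hy
  -- key formula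
  have key : ∀ p : W × Fin w, (x ᵥ* G') p = ∑ i : Fin r, y (vert p.1 i) * V i p.2 := by
    intro p
    simp only [Matrix.vecMul, dotProduct, hG', hy, Finset.mul_sum]
    rw [Finset.sum_comm]
    refine Finset.sum_congr rfl fun i _ => ?_
    rw [Finset.sum_mul]
    ring_nf
    exact Finset.sum_congr rfl fun _ _ => by ring
  -- y ≠ 0
  have hy0 : y ≠ 0 := by
    intro h
    apply hx
    funext p
    simp [key p, h, Pi.zero_apply]
  have hwpos : 0 < w := lt_of_lt_of_le hr hw
  -- zero set of y
  set S : Finset (Fin N) := Finset.univ.filter (fun n => y n = 0) with hS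
  have hScard : (S.card : ℝ) ≤ (1 - D) * N := by
    have h1 := hdist x hy0
    have h2 : S.card + (Finset.univ.filter (fun n => ¬ y n = 0)).card = N := by
      rw [hS, Finset.card_filter_add_card_filter_not]
      simp
    have h3 : ((Finset.univ.filter (fun n => ¬ y n = 0)).card : ℝ)
        = (N : ℝ) - S.card := by
      have := congrArg (fun n : ℕ => (n : ℝ)) h2
      push_cast at this
      linarith
    have : D * N ≤ (N : ℝ) - S.card := by
      rw [← h3]; exact h1
    nlinarith
  -- bad walks
  set bad : Finset W := Finset.univ.filter (fun ω : W => ∀ i, vert ω i ∈ S) with hbad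
  have hbadcard : (bad.card : ℝ) ≤ (1 - D + δ) ^ r * Fintype.card W := by
    refine le_trans (hmix S) ?_
    have hb0 : (0:ℝ) ≤ (S.card : ℝ) / N + δ := by positivity
    have hb1 : (S.card : ℝ) / N + δ ≤ 1 - D + δ := by
      have : (S.card : ℝ) / N ≤ 1 - D := by
        rw [div_le_iff₀ (by exact_mod_cast hN)]
        linarith
      linarith
    have := pow_le_pow_left₀ hb0 hb1 r
    have hWc : (0:ℝ) ≤ (Fintype.card W : ℝ) := by positivity
    exact mul_le_mul_of_nonneg_right this hWc
  -- good walks have ≥ w - r nonzero entries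
  have hgood : ∀ ω : W, (¬ ∀ i, vert ω i ∈ S) →
      w - r ≤ (Finset.univ.filter (fun j : Fin w => (x ᵥ* G') (ω, j) ≠ 0)).card := by
    intro ω hω
    push_neg at hω
    obtain ⟨i0, hi0⟩ := hω
    have hi0' : y (vert ω i0) ≠ 0 := by
      intro h; exact hi0 (by simp [hS, h])
    set p : Polynomial F := ∑ i : Fin r, Polynomial.C (y (vert ω i)) * Polynomial.X ^ ((i:ℕ)+1)
      with hp
    have hpne : p ≠ 0 := by
      intro h
      have : p.coeff ((i0:ℕ)+1) = y (vert ω i0) := by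
        rw [hp, Polynomial.finset_sum_coeff]
        rw [Finset.sum_eq_single i0]
        · simp
        · intro b _ hb
          have hne : (i0:ℕ) + 1 ≠ (b:ℕ) + 1 := by
            intro hc
            exact hb (Fin.ext (Nat.succ_injective hc)).symm
          rw [Polynomial.coeff_C_mul, Polynomial.coeff_X_pow, if_neg hne, mul_zero]
        · simp
      rw [h] at this
      simp at this
      exact hi0' this.symm
    have hdeg : p.natDegree ≤ r := by
      refine Polynomial.natDegree_sum_le_of_forall_le _ _ fun i _ => ?_
      refine le_trans (Polynomial.natDegree_C_mul_le _ _) ?_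
      simpa using (Nat.succ_le_of_lt i.isLt)
    have heval : ∀ j : Fin w, p.eval (cf j) = (x ᵥ* G') (ω, j) := by
      intro j
      rw [key (ω, j), hp]
      simp [Polynomial.eval_finset_sum, hV]
    -- zeros ≤ r
    have hzero : (Finset.univ.filter (fun j : Fin w => (x ᵥ* G') (ω, j) = 0)).card ≤ r := by
      have hinj : Set.InjOn cf ↑(Finset.univ.filter (fun j : Fin w => (x ᵥ* G') (ω, j) = 0)) :=
        hcf_inj.injOn
      have hmap : ∀ j ∈ Finset.univ.filter (fun j : Fin w => (x ᵥ* G') (ω, j) = 0),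
          cf j ∈ p.roots.toFinset := by
        intro j hj
        simp only [Finset.mem_filter] at hj
        rw [Multiset.mem_toFinset, Polynomial.mem_roots']
        exact ⟨hpne, by rw [Polynomial.IsRoot, heval j, hj.2]⟩
      calc (Finset.univ.filter (fun j : Fin w => (x ᵥ* G') (ω, j) = 0)).card
          ≤ p.roots.toFinset.card := Finset.card_le_card_of_injOn cf hmap hinj
        _ ≤ Multiset.card p.roots := Multiset.toFinset_card_le _
        _ ≤ p.natDegree := Polynomial.card_roots' p
        _ ≤ r := hdeg
    have hsum : (Finset.univ.filter (fun j : Fin w => (x ᵥ* G') (ω, j) = 0)).card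
        + (Finset.univ.filter (fun j : Fin w => ¬ (x ᵥ* G') (ω, j) = 0)).card = w := by
      rw [Finset.card_filter_add_card_filter_not]; simp
    simp only [ne_eq]
    omega
  -- counting
  set Z := Finset.univ.filter (fun j : W × Fin w => (x ᵥ* G') j ≠ 0) with hZ
  set good : Finset W := Finset.univ.filter (fun ω : W => ¬ ∀ i, vert ω i ∈ S) with hgd
  have hsplit : Z.card = ∑ ω : W, (Finset.univ.filter (fun j : Fin w => (x ᵥ* G') (ω, j) ≠ 0)).card := by
    simp only [hZ, Finset.card_filter, Fintype.sum_prod_type]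
  have hlow : good.card * (w - r) ≤ Z.card := by
    rw [hsplit]
    calc good.card * (w - r) = ∑ _ω ∈ good, (w - r) := by
          rw [Finset.sum_const, smul_eq_mul]
      _ ≤ ∑ ω ∈ good, (Finset.univ.filter (fun j : Fin w => (x ᵥ* G') (ω, j) ≠ 0)).card := by
          refine Finset.sum_le_sum fun ω hω => ?_
          rw [hgd, Finset.mem_filter] at hω
          exact hgood ω hω.2
      _ ≤ ∑ ω : W, (Finset.univ.filter (fun j : Fin w => (x ᵥ* G') (ω, j) ≠ 0)).card :=
          Finset.sum_le_sum_of_subset (Finset.subset_univ _)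
  have hgb : bad.card + good.card = Fintype.card W := by
    rw [hgd, hbad, Finset.card_filter_add_card_filter_not]
    simp [Finset.card_univ]
  -- real arithmetic
  have hZr : ((Fintype.card W : ℝ) - bad.card) * ((w : ℝ) - r) ≤ (Z.card : ℝ) := by
    have h1 := (Nat.cast_le (α := ℝ)).mpr hlow
    push_cast [Nat.cast_sub hw] at h1
    have h3 : (good.card : ℝ) = (Fintype.card W : ℝ) - bad.card := by
      have := congrArg (fun n : ℕ => (n : ℝ)) hgb
      push_cast at this
      linarith
    rw [h3] at h1
    linarith
  set e : ℝ := (1 - D + δ) ^ r with he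
  have he0 : (0:ℝ) ≤ e := he ▸ pow_nonneg (by linarith) r
  have hdiv : (r : ℝ) / w * w = r := by
    field_simp
  have hwr : (r : ℝ) ≤ w := by exact_mod_cast hw
  have hWc0 : (0:ℝ) ≤ (Fintype.card W : ℝ) := by positivity
  nlinarith [hbadcard, hZr, mul_le_mul_of_nonneg_right hbadcard (sub_nonneg.mpr hwr),
    mul_nonneg (mul_nonneg he0 hWc0) (le_of_lt (lt_of_lt_of_le (by exact_mod_cast hr : (0:ℝ) < r) hwr))]
end
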